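/- Let C ∈ ℂ^{k×k} and let T = [[J_k(λ), C], [0, J_k(λ)]] ∈ ℂ^{2k×2k} be block upper triangular. If c_{k,1} = 0 and Ce₁ = 0, the eigenspace of T for λ is span{(e₁,0), (0,e₁)}; if c_{k,1} = 0 and Ce₁ ≠ 0, it is span{(e₁,0), (N_k C e₁, e₁)}; if c_{k,1} ≠ 0, it is span{(e₁,0)}. Here N_kᵀ = λI_k − J_k(λ). -/

import Mathlib

open Matrix

/-- The `k × k` Jordan block with eigenvalue `x`. -/
def jordanBlock (k : ℕ) (x : ℂ) : Matrix (Fin k) (Fin k) ℂ :=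
  Matrix.of fun i j => if i = j then x else if (i : ℕ) + 1 = (j : ℕ) then 1 else 0

section aux
variable {k : ℕ} (hk : 0 < k) (lam : ℂ)

noncomputable def Smat (k : ℕ) (lam : ℂ) : Matrix (Fin k) (Fin k) ℂ :=
  jordanBlock k lam - lam • 1

lemma Smat_apply (i j : Fin k) :
    Smat k lam i j = if (i : ℕ) + 1 = (j : ℕ) then 1 else 0 := by
  simp only [Smat, jordanBlock, Matrix.sub_apply, Matrix.smul_apply, Matrix.one_apply,
    Matrix.of_apply, smul_eq_mul, mul_ite, mul_one, mul_zero]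
  rcases eq_or_ne i j with h | h
  · simp [h, (by omega : ¬ ((j:ℕ) + 1 = (j:ℕ)))]
  · simp [h]

lemma Smat_mulVec (w : Fin k → ℂ) (i : Fin k) :
    (Smat k lam).mulVec w i = if h : (i : ℕ) + 1 < k then w ⟨(i:ℕ)+1, h⟩ else 0 := by
  rw [Matrix.mulVec]
  unfold dotProduct
  split
  · next h =>
    rw [Finset.sum_eq_single (⟨(i:ℕ)+1, h⟩ : Fin k)]
    · simp only [Smat_apply]; simp
    · intro b _ hb
      simp only [Smat_apply]
      have : ¬ ((i:ℕ) + 1 = (b:ℕ)) := fun hc => hb (Fin.ext hc.symm)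
      simp [this]
    · simp
  · next h =>
    apply Finset.sum_eq_zero
    intro b _
    simp only [Smat_apply]
    have : ¬ ((i:ℕ) + 1 = (b:ℕ)) := by omega
    simp [this]

lemma Smat_ker_iff (w : Fin k → ℂ) :
    (Smat k lam).mulVec w = 0 ↔ w = w ⟨0, hk⟩ • (Pi.single (⟨0, hk⟩ : Fin k) 1 : Fin k → ℂ) := by
  constructor
  · intro h
    funext j
    rcases eq_or_ne j (⟨0, hk⟩ : Fin k) with hj | hj
    · subst hj; simp
    · have hj0 : 0 < (j : ℕ) := by
        rcases Nat.eq_zero_or_pos (j : ℕ) with h' | h'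
        · exact absurd (Fin.ext h') hj
        · exact h'
      have hlt : ((j:ℕ) - 1) < k := by omega
      have := congrFun h ⟨(j:ℕ)-1, hlt⟩
      rw [Smat_mulVec] at this
      have h2 : ((j:ℕ) - 1) + 1 < k := by omega
      rw [dif_pos h2] at this
      have : w j = 0 := by
        rw [show j = (⟨((j:ℕ)-1)+1, h2⟩ : Fin k) from Fin.ext (by simp; omega)]
        exact this
      rw [this]
      simp [Pi.single_apply, hj]
  · intro h
    rw [h]
    funext i
    rw [Matrix.mulVec_smul, Pi.smul_apply, Smat_mulVec]
    split
    · next h' =>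
      rw [Pi.single_apply, if_neg (by intro hc; have := congrArg Fin.val hc; simp at this)]
      simp
    · simp

end aux

section aux2
variable {k : ℕ} (hk : 0 < k) (lam : ℂ)

lemma Nmat_mulVec (u : Fin k → ℂ) (i : Fin k) :
    ((lam • (1 : Matrix (Fin k) (Fin k) ℂ) - jordanBlock k lam)ᵀ).mulVec u i =
      if h : 0 < (i : ℕ) then -u ⟨(i:ℕ)-1, by omega⟩ else 0 := by
  have hN : ∀ a b : Fin k, (lam • (1 : Matrix (Fin k) (Fin k) ℂ) - jordanBlock k lam)ᵀ a b
      = -(if (b:ℕ) + 1 = (a:ℕ) then 1 else 0) := by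
    intro a b
    have := Smat_apply lam b a
    simp only [Smat] at this
    rw [Matrix.transpose_apply, show lam • (1 : Matrix (Fin k) (Fin k) ℂ) - jordanBlock k lam
      = -(jordanBlock k lam - lam • 1) from (neg_sub _ _).symm, Matrix.neg_apply, this]
  rw [Matrix.mulVec]
  unfold dotProduct
  split
  · next h =>
    rw [Finset.sum_eq_single (⟨(i:ℕ)-1, by omega⟩ : Fin k)]
    · simp only [hN]; simp [show (i:ℕ)-1+1 = (i:ℕ) by omega]
    · intro b _ hb
      simp only [hN]
      have : ¬ ((b:ℕ) + 1 = (i:ℕ)) := by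
        intro hc; exact hb (Fin.ext (by simp only [Fin.val_mk]; omega))
      simp [this]
    · simp
  · next h =>
    apply Finset.sum_eq_zero
    intro b _
    simp only [hN]
    have : ¬ ((b:ℕ) + 1 = (i:ℕ)) := by omega
    simp [this]

lemma Smat_mulVec_Nmat (u : Fin k → ℂ) (hu : u ⟨k-1, Nat.sub_lt hk Nat.one_pos⟩ = 0) :
    (Smat k lam).mulVec
      (((lam • (1 : Matrix (Fin k) (Fin k) ℂ) - jordanBlock k lam)ᵀ).mulVec u) = -u := by
  funext i
  rw [Smat_mulVec]
  split
  · next h =>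
    rw [Nmat_mulVec, dif_pos (by omega : 0 < ((i:ℕ)+1))]
    rw [Pi.neg_apply, neg_inj]
    congr 1
  · next h =>
    have hik := i.isLt
    have : i = (⟨k-1, by omega⟩ : Fin k) := Fin.ext (by simp only [Fin.val_mk]; omega)
    rw [Pi.neg_apply, this, hu, neg_zero]

end aux2


/-- Eigenspace of `T = [[J_k(λ), C], [0, J_k(λ)]]` for `λ`, in the three cases
`c_{k,1} = 0 ∧ Ce₁ = 0`, `c_{k,1} = 0 ∧ Ce₁ ≠ 0`, and `c_{k,1} ≠ 0`. -/
theorem eigenspace_two_jordan_blocks {k : ℕ} (hk : 0 < k)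
    (lam : ℂ) (C : Matrix (Fin k) (Fin k) ℂ) :
    let T : Matrix (Fin k ⊕ Fin k) (Fin k ⊕ Fin k) ℂ :=
      Matrix.fromBlocks (jordanBlock k lam) C 0 (jordanBlock k lam)
    let e1 : Fin k → ℂ := Pi.single (⟨0, hk⟩ : Fin k) 1
    let N : Matrix (Fin k) (Fin k) ℂ :=
      (lam • (1 : Matrix (Fin k) (Fin k) ℂ) - jordanBlock k lam)ᵀ
    let E := LinearMap.ker
      ((T - lam • (1 : Matrix (Fin k ⊕ Fin k) (Fin k ⊕ Fin k) ℂ)).mulVecLin)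
    (C ⟨k - 1, by omega⟩ ⟨0, hk⟩ = 0 → C.mulVec e1 = 0 →
      E = Submodule.span ℂ
        {Sum.elim e1 (0 : Fin k → ℂ), Sum.elim (0 : Fin k → ℂ) e1}) ∧
    (C ⟨k - 1, by omega⟩ ⟨0, hk⟩ = 0 → C.mulVec e1 ≠ 0 →
      E = Submodule.span ℂ
        {Sum.elim e1 (0 : Fin k → ℂ), Sum.elim (N.mulVec (C.mulVec e1)) e1}) ∧
    (C ⟨k - 1, by omega⟩ ⟨0, hk⟩ ≠ 0 →
      E = Submodule.span ℂ {Sum.elim e1 (0 : Fin k → ℂ)}) := by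
  intro T e1 N E
  have hkk : k - 1 < k := by omega
  have he1S : (Smat k lam).mulVec e1 = 0 := by
    rw [Smat_ker_iff hk]
    simp [e1]
  have hCe1 : C.mulVec e1 = fun i => C i ⟨0, hk⟩ := by
    simp [e1, Matrix.mulVec_single]
    rfl
  have hM : T - lam • (1 : Matrix (Fin k ⊕ Fin k) (Fin k ⊕ Fin k) ℂ)
      = Matrix.fromBlocks (Smat k lam) C 0 (Smat k lam) := by
    rw [show (1 : Matrix (Fin k ⊕ Fin k) (Fin k ⊕ Fin k) ℂ)
      = Matrix.fromBlocks 1 0 0 1 from Matrix.fromBlocks_one.symm,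
      Matrix.fromBlocks_smul]
    simp only [T, Smat, sub_eq_add_neg, Matrix.fromBlocks_neg, Matrix.fromBlocks_add,
      smul_zero, neg_zero, add_zero, zero_add]
  have hmem : ∀ x y : Fin k → ℂ, Sum.elim x y ∈ E ↔
      ((Smat k lam).mulVec x + C.mulVec y = 0 ∧ (Smat k lam).mulVec y = 0) := by
    intro x y
    simp only [E, LinearMap.mem_ker, Matrix.mulVecLin_apply, hM, Matrix.fromBlocks_mulVec,
      Matrix.zero_mulVec, zero_add]
    constructor
    · intro h
      exact ⟨funext fun i => congrFun h (Sum.inl i), funext fun i => congrFun h (Sum.inr i)⟩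
    · rintro ⟨h1, h2⟩
      funext j
      cases j with
      | inl i => exact congrFun h1 i
      | inr i => exact congrFun h2 i
  have hvdec : ∀ v : (Fin k ⊕ Fin k) → ℂ, v = Sum.elim (v ∘ Sum.inl) (v ∘ Sum.inr) := by
    intro v; funext j; cases j <;> rfl
  have hg1 : Sum.elim e1 (0 : Fin k → ℂ) ∈ E := by
    rw [hmem]
    exact ⟨by rw [he1S, Matrix.mulVec_zero, add_zero], by rw [Matrix.mulVec_zero]⟩
  have key : C ⟨k - 1, hkk⟩ ⟨0, hk⟩ = 0 →
      E = Submodule.span ℂ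
        {Sum.elim e1 (0 : Fin k → ℂ), Sum.elim (N.mulVec (C.mulVec e1)) e1} := by
    intro hc
    have hu : (C.mulVec e1) ⟨k - 1, hkk⟩ = 0 := by rw [hCe1]; exact hc
    have hSN : (Smat k lam).mulVec (N.mulVec (C.mulVec e1)) = -(C.mulVec e1) := by
      simp only [N]
      exact Smat_mulVec_Nmat hk lam (C.mulVec e1) hu
    have hg2 : Sum.elim (N.mulVec (C.mulVec e1)) e1 ∈ E := by
      rw [hmem]
      exact ⟨by rw [hSN]; exact neg_add_cancel _, he1S⟩
    apply le_antisymm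
    · intro v hv
      rw [hvdec v] at hv
      obtain ⟨h1, h2⟩ := (hmem _ _).mp hv
      set x := v ∘ Sum.inl with hx
      set y := v ∘ Sum.inr with hy'
      have hy := (Smat_ker_iff hk lam y).mp h2
      set y0 := y ⟨0, hk⟩ with hy0
      have hSw : (Smat k lam).mulVec (x - y0 • N.mulVec (C.mulVec e1)) = 0 := by
        rw [Matrix.mulVec_sub, Matrix.mulVec_smul, hSN]
        have hCy : C.mulVec y = y0 • C.mulVec e1 := by
          rw [hy, Matrix.mulVec_smul]
        rw [show (Smat k lam).mulVec x = -(C.mulVec y) by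
          rw [eq_neg_iff_add_eq_zero]; exact h1, hCy]
        simp
      have hw := (Smat_ker_iff hk lam _).mp hSw
      set w0 := (x - y0 • N.mulVec (C.mulVec e1)) ⟨0, hk⟩ with hw0
      apply Submodule.mem_span_pair.mpr
      refine ⟨w0, y0, ?_⟩
      funext j
      cases j with
      | inl i =>
        show w0 * (Pi.single (⟨0, hk⟩ : Fin k) 1 : Fin k → ℂ) i
          + y0 * (N.mulVec (C.mulVec e1)) i = x i
        have h3 := congrFun hw i
        simp only [Pi.sub_apply, Pi.smul_apply, smul_eq_mul] at h3
        linear_combination -h3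
      | inr i =>
        show w0 * (0 : Fin k → ℂ) i + y0 * (Pi.single (⟨0, hk⟩ : Fin k) 1 : Fin k → ℂ) i = y i
        have h4 := congrFun hy i
        simp only [Pi.smul_apply, smul_eq_mul] at h4
        simp only [Pi.zero_apply]
        linear_combination -h4
    · rw [Submodule.span_le]
      intro g hg
      simp only [Set.mem_insert_iff, Set.mem_singleton_iff] at hg
      rcases hg with rfl | rfl
      · exact hg1
      · exact hg2
  refine ⟨?_, fun hc _ => key hc, ?_⟩
  · intro hc hce
    have h := key hc
    rwa [hce, Matrix.mulVec_zero] at h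
  · intro hc
    apply le_antisymm
    · intro v hv
      rw [hvdec v] at hv
      obtain ⟨h1, h2⟩ := (hmem _ _).mp hv
      set x := v ∘ Sum.inl with hx
      set y := v ∘ Sum.inr with hy'
      have hy := (Smat_ker_iff hk lam y).mp h2
      have hy00 : y ⟨0, hk⟩ = 0 := by
        have h5 := congrFun h1 ⟨k - 1, hkk⟩
        rw [Pi.add_apply, Smat_mulVec, dif_neg (by simp only [Fin.val_mk]; omega),
          zero_add, hy, Matrix.mulVec_smul, hCe1, Pi.smul_apply, smul_eq_mul] at h5
        rcases mul_eq_zero.mp h5 with h6 | h6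
        · exact h6
        · exact absurd h6 hc
      have hyz : y = 0 := by rw [hy, hy00, zero_smul]
      have hx1 : (Smat k lam).mulVec x = 0 := by
        rw [hyz, Matrix.mulVec_zero, add_zero] at h1
        exact h1
      have hxw := (Smat_ker_iff hk lam x).mp hx1
      apply Submodule.mem_span_singleton.mpr
      refine ⟨x ⟨0, hk⟩, ?_⟩
      rw [hvdec v]
      funext j
      cases j with
      | inl i => exact (congrFun hxw i).symm
      | inr i =>
        simp only [Pi.smul_apply, Sum.elim_inl, Sum.elim_inr, smul_eq_mul]
        rw [show (v ∘ Sum.inr) i = y i from rfl, hyz]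
        simp
    · rw [Submodule.span_le]
      intro g hg
      simp only [Set.mem_singleton_iff] at hg
      rcases hg with rfl
      exact hg1
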